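/- Let K ⊂ ℝⁿ be a closed convex set containing the origin in its interior and let σ be a sublinear function with K = {x : σ(x) ≤ 1}. Then for every x not in the recession cone of K, σ(x) = sup_{y ∈ K̂} ⟨x,y⟩ = sup_{y ∈ K*} ⟨x,y⟩. -/

import Mathlib

open RealInnerProductSpace

variable {n : ℕ}

/-- The polar of a set `K`. -/
def polar (K : Set (EuclideanSpace ℝ (Fin n))) : Set (EuclideanSpace ℝ (Fin n)) :=
  {y | ∀ x ∈ K, ⟪x, y⟫ ≤ 1}

/-- The set `K̂` of points of the polar attaining value 1 on `K`. -/
def hatK (K : Set (EuclideanSpace ℝ (Fin n))) : Set (EuclideanSpace ℝ (Fin n)) :=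
  {y ∈ polar K | ∃ x ∈ K, ⟪x, y⟫ = 1}

/-- A function is sublinear if it is convex and positively homogeneous. -/
def IsSublinear (σ : EuclideanSpace ℝ (Fin n) → ℝ) : Prop :=
  ConvexOn ℝ Set.univ σ ∧ ∀ t : ℝ, 0 < t → ∀ x, σ (t • x) = t * σ x

/-- The recession cone of `K`. -/
def recCone (K : Set (EuclideanSpace ℝ (Fin n))) : Set (EuclideanSpace ℝ (Fin n)) :=
  {x ∈ K | ∀ t : ℝ, 0 < t → t • x ∈ K}

/-- The support function of a set `T`, as `x ↦ sup_{y ∈ T} ⟪x, y⟫`. -/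
noncomputable def suppFn (T : Set (EuclideanSpace ℝ (Fin n)))
    (x : EuclideanSpace ℝ (Fin n)) : ℝ :=
  sSup ((fun y => ⟪x, y⟫) '' T)

theorem stmt2 (K : Set (EuclideanSpace ℝ (Fin n)))
    (hKcl : IsClosed K) (hKconv : Convex ℝ K) (h0 : (0 : EuclideanSpace ℝ (Fin n)) ∈ interior K)
    (σ : EuclideanSpace ℝ (Fin n) → ℝ) (hσ : IsSublinear σ)
    (hKσ : K = {x | σ x ≤ 1}) :
    ∀ x ∉ recCone K, σ x = suppFn (hatK K) x ∧ σ x = suppFn (polar K) x := by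
  intro x hx
  obtain ⟨hconv, hhom⟩ := hσ
  have hσ0 : σ 0 = 0 := by
    have h2 := hhom 2 (by norm_num) 0
    rw [smul_zero] at h2; linarith
  have hc : 0 < σ x := by
    by_contra h
    push_neg at h
    apply hx
    refine ⟨by rw [hKσ]; exact Set.mem_setOf_eq ▸ h.trans zero_le_one, fun t ht => ?_⟩
    rw [hKσ]
    have : σ (t • x) = t * σ x := hhom t ht x
    simp only [Set.mem_setOf_eq, this]
    nlinarith
  set c := σ x with hcdef
  set z := (c⁻¹ : ℝ) • x with hzdef
  have hσz : σ z = 1 := by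
    rw [hzdef, hhom _ (by positivity)]
    field_simp
    exact hcdef.symm
  have hzK : z ∈ K := by rw [hKσ]; simp [hσz]
  have hxz : x = c • z := by
    rw [hzdef, smul_smul]
    rw [mul_inv_cancel₀ (ne_of_gt hc), one_smul]
  have hznotint : z ∉ interior K := by
    intro hzi
    have hzne : z ≠ 0 := by
      intro h0'
      rw [h0', hσ0] at hσz; norm_num at hσz
    obtain ⟨ε, hε, hball⟩ := Metric.isOpen_iff.1 isOpen_interior z hzi
    set t : ℝ := 1 + ε / (2 * ‖z‖) with htdef
    have hznorm : 0 < ‖z‖ := norm_pos_iff.2 hzne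
    have ht1 : 1 < t := by
      rw [htdef]; nlinarith [div_pos hε (by positivity : (0:ℝ) < 2 * ‖z‖)]
    have hmem : t • z ∈ K := by
      apply interior_subset
      apply hball
      rw [Metric.mem_ball, dist_eq_norm]
      have : t • z - z = (t - 1) • z := by rw [sub_smul, one_smul]
      rw [this, norm_smul, Real.norm_eq_abs, abs_of_pos (by linarith)]
      rw [htdef]
      have : (1 + ε / (2 * ‖z‖) - 1) = ε / (2 * ‖z‖) := by ring
      rw [this, div_mul_eq_mul_div, mul_comm, mul_div_assoc]
      calc ‖z‖ * (ε / (2 * ‖z‖)) = ε / 2 := by field_simp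
        _ < ε := by linarith
    rw [hKσ] at hmem
    have hmem' : σ (t • z) ≤ 1 := hmem
    have : σ (t • z) = t * σ z := hhom t (by linarith) z
    rw [this, hσz, mul_one] at hmem'
    exact absurd hmem' (not_le.2 ht1)
  obtain ⟨f, hf⟩ := geometric_hahn_banach_open_point hKconv.interior isOpen_interior hznotint
  have hfz : (0 : ℝ) < f z := by
    have := hf 0 h0
    simpa using this
  have hfK : ∀ a ∈ K, f a ≤ f z := by
    intro a ha
    by_contra h
    push_neg at h
    have hfa : 0 < f a := lt_trans hfz h
    set t : ℝ := (1 - f z / f a) / 2 with htdef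
    have hq : f z / f a < 1 := (div_lt_one hfa).2 h
    have ht0 : 0 < t := by rw [htdef]; linarith
    have ht1 : t ≤ 1 := by
      rw [htdef]
      have : 0 < f z / f a := div_pos hfz hfa
      linarith
    have hmem : (1 - t) • a + t • (0 : EuclideanSpace ℝ (Fin n)) ∈ interior K :=
      hKconv.combo_self_interior_mem_interior ha h0 (by linarith) ht0 (by ring)
    have hlt := hf _ hmem
    rw [smul_zero, add_zero, map_smul] at hlt
    simp only [smul_eq_mul] at hlt
    have h1t : f z / f a < 1 - t := by rw [htdef]; linarith
    have : f z < (1 - t) * f a := by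
      calc f z = (f z / f a) * f a := by field_simp
        _ < (1 - t) * f a := by exact mul_lt_mul_of_pos_right h1t hfa
    linarith
  set y : EuclideanSpace ℝ (Fin n) :=
    (f z)⁻¹ • ((InnerProductSpace.toDual ℝ (EuclideanSpace ℝ (Fin n))).symm f) with hydef
  have hyw : ∀ w : EuclideanSpace ℝ (Fin n), ⟪w, y⟫ = (f z)⁻¹ * f w := by
    intro w
    rw [hydef, inner_smul_right, real_inner_comm, InnerProductSpace.toDual_symm_apply]
  have hypolar : y ∈ polar K := by
    intro a ha
    rw [hyw a]
    rw [inv_mul_le_iff₀ hfz, mul_one]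
    exact hfK a ha
  have hyz : ⟪z, y⟫ = 1 := by
    rw [hyw z, inv_mul_cancel₀ (ne_of_gt hfz)]
  have hyhat : y ∈ hatK K := ⟨hypolar, z, hzK, hyz⟩
  have hxy : ⟪x, y⟫ = c := by
    rw [hxz, real_inner_smul_left, hyz, mul_one]
  have hbdd : ∀ y' ∈ polar K, ⟪x, y'⟫ ≤ c := by
    intro y' hy'
    rw [hxz, real_inner_smul_left]
    have := hy' z hzK
    nlinarith
  have hhatsub : hatK K ⊆ polar K := fun w hw => hw.1
  have hbddA : BddAbove ((fun y => ⟪x, y⟫) '' polar K) := by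
    refine ⟨c, ?_⟩
    rintro _ ⟨w, hw, rfl⟩
    exact hbdd w hw
  have hbddH : BddAbove ((fun y => ⟪x, y⟫) '' hatK K) :=
    hbddA.mono (Set.image_mono hhatsub)
  constructor
  · apply le_antisymm
    · rw [← hxy]
      exact le_csSup hbddH ⟨y, hyhat, rfl⟩
    · apply csSup_le (Set.Nonempty.image _ ⟨y, hyhat⟩)
      rintro _ ⟨w, hw, rfl⟩
      exact hbdd w (hhatsub hw)
  · apply le_antisymm
    · rw [← hxy]
      exact le_csSup hbddA ⟨y, hhatsub hyhat, rfl⟩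
    · apply csSup_le (Set.Nonempty.image _ ⟨y, hhatsub hyhat⟩)
      rintro _ ⟨w, hw, rfl⟩
      exact hbdd w hw
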